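/- arXiv:2310.06990 — 10 statements merged into one kernel-verified Lean document; each statement's English description precedes it below -/
import Mathlib

section
/- A linear map $\Lambda: H\to L$ is a nonabelian embedding tensor on a 3-Lie algebra $L$ with respect to a coherent action $(H,[-,-,-]_H;\rho^\dag)$ if and only if the graph $Gr(\Lambda)=\{\Lambda h + h : h\in H\}$ is a subalgebra of the nonabelian hemisemidirect product 3-Leibniz algebra $L\ltimes_\rho H$. -/
/-- A map of three arguments that is linear in each slot. -/
def Trilinear (K : Type*) [Field K] {V₁ V₂ V₃ W : Type*}
    [AddCommGroup V₁] [Module K V₁] [AddCommGroup V₂] [Module K V₂]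
    [AddCommGroup V₃] [Module K V₃] [AddCommGroup W] [Module K W]
    (f : V₁ → V₂ → V₃ → W) : Prop :=
  (∀ x y b c, f (x + y) b c = f x b c + f y b c) ∧
  (∀ (r : K) x b c, f (r • x) b c = r • f x b c) ∧
  (∀ a x y c, f a (x + y) c = f a x c + f a y c) ∧
  (∀ (r : K) a x c, f a (r • x) c = r • f a x c) ∧
  (∀ a b x y, f a b (x + y) = f a b x + f a b y) ∧
  (∀ (r : K) a b x, f a b (r • x) = r • f a b x)

/-- A map of two arguments that is linear in each slot. -/
def Bilinear (K : Type*) [Field K] {V₁ V₂ W : Type*}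
    [AddCommGroup V₁] [Module K V₁] [AddCommGroup V₂] [Module K V₂]
    [AddCommGroup W] [Module K W] (f : V₁ → V₂ → W) : Prop :=
  (∀ x y b, f (x + y) b = f x b + f y b) ∧
  (∀ (r : K) x b, f (r • x) b = r • f x b) ∧
  (∀ a x y, f a (x + y) = f a x + f a y) ∧
  (∀ (r : K) a x, f a (r • x) = r • f a x)

/-- The fundamental identity for a ternary bracket. -/
def FundId {V : Type*} [AddCommGroup V] (f : V → V → V → V) : Prop :=
  ∀ a b c d e, f a b (f c d e) = f (f a b c) d e + f c (f a b d) e + f c d (f a b e)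

/-- Skew-symmetry of a ternary bracket. -/
def Skew {V : Type*} [AddCommGroup V] (f : V → V → V → V) : Prop :=
  (∀ a b c, f a b c = - f b a c) ∧ (∀ a b c, f a b c = - f a c b)

/-- A 3-Lie algebra structure: trilinear, skew-symmetric bracket
satisfying the fundamental identity. -/
def Is3Lie (K : Type*) [Field K] {V : Type*} [AddCommGroup V] [Module K V]
    (f : V → V → V → V) : Prop :=
  Trilinear K f ∧ Skew f ∧ FundId f

/-- A 3-Leibniz algebra structure: trilinear bracket satisfying
the fundamental identity (no skew-symmetry required). -/
def Is3Leibniz (K : Type*) [Field K] {V : Type*} [AddCommGroup V] [Module K V]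
    (f : V → V → V → V) : Prop :=
  Trilinear K f ∧ FundId f

/-- A representation of a 3-Lie algebra `(L, brL)` on a vector space `H`,
given by a (skew-symmetric in the first two slots) map `ρ : L → L → H → H`. -/
def Is3LieRep (K : Type*) [Field K] {L H : Type*} [AddCommGroup L] [Module K L]
    [AddCommGroup H] [Module K H] (brL : L → L → L → L) (ρ : L → L → H → H) : Prop :=
  Trilinear K ρ ∧ (∀ a b h, ρ a b h = - ρ b a h) ∧
  (∀ a b c d h, ρ (brL a b c) d h = ρ b c (ρ a d h) + ρ c a (ρ b d h) + ρ a b (ρ c d h)) ∧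
  (∀ a b c d h, ρ a b (ρ c d h) = ρ c d (ρ a b h) + ρ (brL a b c) d h + ρ c (brL a b d) h)

/-- A coherent action of the 3-Lie algebra `(L, brL)` on the 3-Lie algebra `(H, brH)`. -/
def IsCoherentAction (K : Type*) [Field K] {L H : Type*} [AddCommGroup L] [Module K L]
    [AddCommGroup H] [Module K H] (brL : L → L → L → L) (brH : H → H → H → H)
    (ρ : L → L → H → H) : Prop :=
  Is3LieRep K brL ρ ∧
  (∀ a b h₁ h₂ h₃, ρ a b (brH h₁ h₂ h₃)
      = brH (ρ a b h₁) h₂ h₃ + brH h₁ (ρ a b h₂) h₃ + brH h₁ h₂ (ρ a b h₃)) ∧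
  (∀ a b h₁ h₂ h₃, brH (ρ a b h₁) h₂ h₃ = 0)

/-- A nonabelian embedding tensor on `(L, brL)` with respect to the coherent
action `ρ` of `L` on `(H, brH)`. -/
def IsNAEmbeddingTensor (K : Type*) [Field K] {L H : Type*} [AddCommGroup L] [Module K L]
    [AddCommGroup H] [Module K H] (brL : L → L → L → L) (brH : H → H → H → H)
    (ρ : L → L → H → H) (Λ : H →ₗ[K] L) : Prop :=
  ∀ h₁ h₂ h₃, brL (Λ h₁) (Λ h₂) (Λ h₃) = Λ (ρ (Λ h₁) (Λ h₂) h₃ + brH h₁ h₂ h₃)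

/-- A 3-Leibniz-Lie algebra: a 3-Lie algebra `(H, brH)` together with a
trilinear product `tr` satisfying the compatibility conditions. -/
def Is3LeibnizLie (K : Type*) [Field K] {H : Type*} [AddCommGroup H] [Module K H]
    (brH : H → H → H → H) (tr : H → H → H → H) : Prop :=
  Is3Lie K brH ∧ Trilinear K tr ∧
  (∀ h₁ h₂ h₃ h₄ h₅, tr h₁ h₂ (tr h₃ h₄ h₅)
      = tr (tr h₁ h₂ h₃) h₄ h₅ + tr h₃ (tr h₁ h₂ h₄) h₅ + tr h₃ h₄ (tr h₁ h₂ h₅)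
        + tr (brH h₁ h₂ h₃) h₄ h₅ + tr h₃ (brH h₁ h₂ h₄) h₅) ∧
  (∀ h₁ h₂ h₃ h₄ h₅, tr h₁ h₂ (brH h₃ h₄ h₅) = 0) ∧
  (∀ h₁ h₂ h₃ h₄ h₅, brH (tr h₁ h₂ h₃) h₄ h₅ = 0)

/-- A representation of a 3-Leibniz algebra `(A, br)` on `V` via actions `l`, `m`, `r`. -/
def Is3LeibnizRep (K : Type*) [Field K] {A V : Type*} [AddCommGroup A] [Module K A]
    [AddCommGroup V] [Module K V] (br : A → A → A → A)
    (l : A → A → V → V) (m : A → V → A → V) (r : V → A → A → V) : Prop :=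
  Trilinear K l ∧ Trilinear K m ∧ Trilinear K r ∧
  (∀ a₁ a₂ a₃ a₄ u, l a₁ a₂ (l a₃ a₄ u)
      = l (br a₁ a₂ a₃) a₄ u + l a₃ (br a₁ a₂ a₄) u + l a₃ a₄ (l a₁ a₂ u)) ∧
  (∀ a₁ a₂ a₃ a₅ u, l a₁ a₂ (m a₃ u a₅)
      = m (br a₁ a₂ a₃) u a₅ + m a₃ (l a₁ a₂ u) a₅ + m a₃ u (br a₁ a₂ a₅)) ∧
  (∀ a₁ a₂ a₄ a₅ u, l a₁ a₂ (r u a₄ a₅)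
      = r (l a₁ a₂ u) a₄ a₅ + r u (br a₁ a₂ a₄) a₅ + r u a₄ (br a₁ a₂ a₅)) ∧
  (∀ a₁ a₃ a₄ a₅ u, m a₁ u (br a₃ a₄ a₅)
      = r (m a₁ u a₃) a₄ a₅ + m a₃ (m a₁ u a₄) a₅ + l a₃ a₄ (m a₁ u a₅)) ∧
  (∀ a₂ a₃ a₄ a₅ u, r u a₂ (br a₃ a₄ a₅)
      = r (r u a₂ a₃) a₄ a₅ + m a₃ (r u a₂ a₄) a₅ + l a₃ a₄ (r u a₂ a₅))

/-- `Λ` is a nonabelian embedding tensor iff its graph is a subalgebra of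
the nonabelian hemisemidirect product 3-Leibniz algebra `L ⋉_ρ H`. -/
theorem naEmbeddingTensor_iff_graph_subalgebra
    {K L H : Type*} [Field K] [AddCommGroup L] [Module K L] [AddCommGroup H] [Module K H]
    (brL : L → L → L → L) (brH : H → H → H → H) (ρ : L → L → H → H)
    (hL : Is3Lie K brL) (hH : Is3Lie K brH) (hρ : IsCoherentAction K brL brH ρ)
    (Λ : H →ₗ[K] L) :
    IsNAEmbeddingTensor K brL brH ρ Λ ↔
      ∀ p q r : L × H,
        p ∈ {x : L × H | ∃ h, x = (Λ h, h)} →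
        q ∈ {x : L × H | ∃ h, x = (Λ h, h)} →
        r ∈ {x : L × H | ∃ h, x = (Λ h, h)} →
        (brL p.1 q.1 r.1, ρ p.1 q.1 r.2 + brH p.2 q.2 r.2) ∈ {x : L × H | ∃ h, x = (Λ h, h)} := by
  constructor
  · rintro hT p q r ⟨h₁, rfl⟩ ⟨h₂, rfl⟩ ⟨h₃, rfl⟩
    exact ⟨ρ (Λ h₁) (Λ h₂) h₃ + brH h₁ h₂ h₃, by simp [hT h₁ h₂ h₃]⟩
  · intro hG h₁ h₂ h₃
    obtain ⟨h, hh⟩ := hG (Λ h₁, h₁) (Λ h₂, h₂) (Λ h₃, h₃) ⟨h₁, rfl⟩ ⟨h₂, rfl⟩ ⟨h₃, rfl⟩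
    obtain ⟨e1, e2⟩ := Prod.mk.injEq .. ▸ hh
    rw [e1, e2]
end

section
/- Let $\Lambda:H\to L$ be a nonabelian embedding tensor on a 3-Lie algebra $L$ with respect to a coherent action $(H,[-,-,-]_H;\rho^\dag)$. Then the bracket $[h_1,h_2,h_3]_\Lambda := \rho(\Lambda h_1,\Lambda h_2)h_3 + [h_1,h_2,h_3]_H$ defines a 3-Leibniz algebra structure on $H$, and $\Lambda$ is an algebra homomorphism from $(H,[-,-,-]_\Lambda)$ to $(L,[-,-,-]_L)$. -/
/-- the descendent bracket `[h₁,h₂,h₃]_Λ = ρ(Λh₁,Λh₂)h₃ + [h₁,h₂,h₃]_H`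
makes `H` a 3-Leibniz algebra, and `Λ` is an algebra homomorphism to `(L, brL)`. -/
theorem descendent_3Leibniz
    {K L H : Type*} [Field K] [AddCommGroup L] [Module K L] [AddCommGroup H] [Module K H]
    (brL : L → L → L → L) (brH : H → H → H → H) (ρ : L → L → H → H)
    (hL : Is3Lie K brL) (hH : Is3Lie K brH) (hρ : IsCoherentAction K brL brH ρ)
    (Λ : H →ₗ[K] L) (hΛ : IsNAEmbeddingTensor K brL brH ρ Λ) :
    Is3Leibniz K (fun h₁ h₂ h₃ => ρ (Λ h₁) (Λ h₂) h₃ + brH h₁ h₂ h₃) ∧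
      ∀ h₁ h₂ h₃, Λ (ρ (Λ h₁) (Λ h₂) h₃ + brH h₁ h₂ h₃) = brL (Λ h₁) (Λ h₂) (Λ h₃) := by

  obtain ⟨⟨⟨ρa1, ρs1, ρa2, ρs2, ρa3, ρs3⟩, ρskew, ρrep3, ρrep4⟩, ρdist, ρzero⟩ := hρ
  obtain ⟨⟨Ha1, Hs1, Ha2, Hs2, Ha3, Hs3⟩, ⟨Hsk1, Hsk2⟩, Hfund⟩ := hH
  -- brH vanishes when any slot is in the image of ρ
  have z2 : ∀ a b h x y, brH x (ρ a b h) y = 0 := by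
    intro a b h x y
    rw [Hsk1, ρzero, neg_zero]
  have z3 : ∀ a b h x y, brH x y (ρ a b h) = 0 := by
    intro a b h x y
    rw [Hsk2, z2, neg_zero]
  have zρ : ∀ a b h₁ h₂ h₃, ρ a b (brH h₁ h₂ h₃) = 0 := by
    intro a b h₁ h₂ h₃
    rw [ρdist, ρzero, z2, z3]; abel
  have hΛ' : ∀ h₁ h₂ h₃, Λ (ρ (Λ h₁) (Λ h₂) h₃ + brH h₁ h₂ h₃)
      = brL (Λ h₁) (Λ h₂) (Λ h₃) := fun h₁ h₂ h₃ => (hΛ h₁ h₂ h₃).symm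
  refine ⟨⟨?_, ?_⟩, hΛ'⟩
  · refine ⟨?_, ?_, ?_, ?_, ?_, ?_⟩
    · intro x y b c
      simp only [map_add, ρa1, Ha1]
      abel
    · intro r x b c
      simp only [map_smul, ρs1, Hs1, smul_add]
    · intro a x y c
      simp only [map_add, ρa2, Ha2]
      abel
    · intro r a x c
      simp only [map_smul, ρs2, Hs2, smul_add]
    · intro a b x y
      simp only [ρa3, Ha3]
      abel
    · intro r a b x
      simp only [ρs3, Hs3, smul_add]
  · intro a b c d e
    simp only []
    rw [hΛ' a b c, hΛ' a b d, Ha3 a b, Ha1, Ha2, ρa3 (Λ c) (Λ d), Ha3 c d]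
    rw [ρa3 (Λ a) (Λ b)]
    simp only [zρ, z2, z3, ρzero, add_zero, zero_add]
    rw [ρrep4 (Λ a) (Λ b) (Λ c) (Λ d) e, Hfund a b c d e]
    abel
end

section
/- Let $(f_L,f_H)$ be a homomorphism from a nonabelian embedding tensor 3-Lie algebra $H\xrightarrow{\Lambda_1}L$ to $H\xrightarrow{\Lambda_2}L$. Then $f_H$ is a homomorphism of 3-Leibniz algebras from the descendent algebra $(H,[-,-,-]_{\Lambda_1})$ to $(H,[-,-,-]_{\Lambda_2})$. -/
/-- a homomorphism `(f_L, f_H)` of nonabelian embedding tensor 3-Lie algebras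
induces a homomorphism `f_H` of the descendent 3-Leibniz algebras. -/
theorem hom_descendent_3Leibniz
    {K L H : Type*} [Field K] [AddCommGroup L] [Module K L] [AddCommGroup H] [Module K H]
    (brL : L → L → L → L) (brH : H → H → H → H) (ρ : L → L → H → H)
    (hL : Is3Lie K brL) (hH : Is3Lie K brH) (hρ : IsCoherentAction K brL brH ρ)
    (Λ₁ Λ₂ : H →ₗ[K] L)
    (hΛ₁ : IsNAEmbeddingTensor K brL brH ρ Λ₁) (hΛ₂ : IsNAEmbeddingTensor K brL brH ρ Λ₂)
    (fL : L →ₗ[K] L) (fH : H →ₗ[K] H)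
    (hfL : ∀ a b c, fL (brL a b c) = brL (fL a) (fL b) (fL c))
    (hfH : ∀ a b c, fH (brH a b c) = brH (fH a) (fH b) (fH c))
    (hcomm : ∀ h, Λ₂ (fH h) = fL (Λ₁ h))
    (hequiv : ∀ a b h, fH (ρ a b h) = ρ (fL a) (fL b) (fH h)) :
    ∀ h₁ h₂ h₃, fH (ρ (Λ₁ h₁) (Λ₁ h₂) h₃ + brH h₁ h₂ h₃)
      = ρ (Λ₂ (fH h₁)) (Λ₂ (fH h₂)) (fH h₃) + brH (fH h₁) (fH h₂) (fH h₃) := by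
  intro h₁ h₂ h₃
  rw [map_add, hequiv, hfH, hcomm, hcomm]
end

section
/- Let $(H,[-,-,-]_H,\{-,-,-\}_H)$ be a 3-Leibniz-Lie algebra. Then the bracket $\langle h_1,h_2,h_3\rangle := [h_1,h_2,h_3]_H + \{h_1,h_2,h_3\}_H$ defines a 3-Leibniz algebra structure on $H$. -/
/-- the subadjacent bracket `⟨h₁,h₂,h₃⟩ = [h₁,h₂,h₃]_H + {h₁,h₂,h₃}_H`
of a 3-Leibniz-Lie algebra is a 3-Leibniz algebra structure. -/
theorem subadjacent_3Leibniz
    {K H : Type*} [Field K] [AddCommGroup H] [Module K H]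
    (brH tr : H → H → H → H) (h : Is3LeibnizLie K brH tr) :
    Is3Leibniz K (fun a b c => brH a b c + tr a b c) := by
  obtain ⟨⟨⟨b1,b2,b3,b4,b5,b6⟩, ⟨sk1, sk2⟩, fid⟩, ⟨t1,t2,t3,t4,t5,t6⟩, leib, trbr, brtr⟩ := h
  have brtr3 : ∀ a b c d e, brH a b (tr c d e) = 0 := by
    intro a b c d e
    rw [sk2, sk1, brtr]; simp
  have brtr2 : ∀ a b c d e, brH a (tr c d e) b = 0 := by
    intro a b c d e
    rw [sk1, brtr]; simp
  refine ⟨⟨?_, ?_, ?_, ?_, ?_, ?_⟩, ?_⟩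
  · intro x y b c; dsimp only; rw [b1, t1]; abel
  · intro r x b c; dsimp only; rw [b2, t2, smul_add]
  · intro a x y c; dsimp only; rw [b3, t3]; abel
  · intro r a x c; dsimp only; rw [b4, t4, smul_add]
  · intro a b x y; dsimp only; rw [b5, t5]; abel
  · intro r a b x; dsimp only; rw [b6, t6, smul_add]
  · intro a b c d e
    dsimp only
    simp only [b5, t5, b1, t1, b3, t3, trbr, brtr, brtr2, brtr3, add_zero, zero_add]
    rw [fid, leib]
    abel
end

section
/- Let $\Lambda:H\to L$ be a nonabelian embedding tensor on a 3-Lie algebra $L$ with respect to a coherent action $(H,[-,-,-]_H;\rho^\dag)$. Define $\{h_1,h_2,h_3\}_\Lambda := \rho(\Lambda h_1,\Lambda h_2)h_3$. Then $(H,[-,-,-]_H,\{-,-,-\}_\Lambda)$ is a 3-Leibniz-Lie algebra. -/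
/-- a nonabelian embedding tensor 3-Lie algebra induces a
3-Leibniz-Lie algebra via `{h₁,h₂,h₃}_Λ := ρ(Λh₁,Λh₂)h₃`. -/
theorem naEmbeddingTensor_induces_3LeibnizLie
    {K L H : Type*} [Field K] [AddCommGroup L] [Module K L] [AddCommGroup H] [Module K H]
    (brL : L → L → L → L) (brH : H → H → H → H) (ρ : L → L → H → H)
    (hL : Is3Lie K brL) (hH : Is3Lie K brH) (hρ : IsCoherentAction K brL brH ρ)
    (Λ : H →ₗ[K] L) (hΛ : IsNAEmbeddingTensor K brL brH ρ Λ) :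
    Is3LeibnizLie K brH (fun h₁ h₂ h₃ => ρ (Λ h₁) (Λ h₂) h₃) := by
  obtain ⟨⟨⟨ρa1, ρs1, ρa2, ρs2, ρa3, ρs3⟩, _, _, ρr4⟩, ρder, ρzero⟩ := hρ
  have hsk1 := hH.2.1.1
  have hsk2 := hH.2.1.2
  refine ⟨hH, ?_, ?_, ?_, ?_⟩
  · refine ⟨?_, ?_, ?_, ?_, ?_, ?_⟩ <;> intros <;> simp only [map_add, map_smul, ρa1, ρs1, ρa2, ρs2, ρa3, ρs3]
  · intro h₁ h₂ h₃ h₄ h₅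
    simp only []
    have key := ρr4 (Λ h₁) (Λ h₂) (Λ h₃) (Λ h₄) h₅
    rw [hΛ h₁ h₂ h₃, hΛ h₁ h₂ h₄, map_add, map_add, ρa1, ρa2] at key
    rw [key]; abel
  · intro h₁ h₂ h₃ h₄ h₅
    simp only []
    rw [ρder]
    have e2 : brH h₃ (ρ (Λ h₁) (Λ h₂) h₄) h₅ = 0 := by
      rw [hsk1]; rw [ρzero]; simp
    have e3 : brH h₃ h₄ (ρ (Λ h₁) (Λ h₂) h₅) = 0 := by
      rw [hsk2, hsk1]; rw [ρzero]; simp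
    rw [ρzero, e2, e3]; simp
  · intro h₁ h₂ h₃ h₄ h₅
    exact ρzero _ _ _ _ _
end

section
/- Let $(f_L,f_H)$ be a homomorphism from $H\xrightarrow{\Lambda_1}L$ to $H\xrightarrow{\Lambda_2}L$. Then $f_H$ is a homomorphism of 3-Leibniz-Lie algebras from $(H,[-,-,-]_H,\{-,-,-\}_{\Lambda_1})$ to $(H,[-,-,-]_H,\{-,-,-\}_{\Lambda_2})$, i.e. $f_H(\{h_1,h_2,h_3\}_{\Lambda_1})=\{f_H(h_1),f_H(h_2),f_H(h_3)\}_{\Lambda_2}$. -/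
/-- a homomorphism `(f_L, f_H)` of nonabelian embedding tensor 3-Lie algebras
induces a homomorphism `f_H` of the induced 3-Leibniz-Lie algebras. -/
theorem hom_3LeibnizLie
    {K L H : Type*} [Field K] [AddCommGroup L] [Module K L] [AddCommGroup H] [Module K H]
    (brL : L → L → L → L) (brH : H → H → H → H) (ρ : L → L → H → H)
    (hL : Is3Lie K brL) (hH : Is3Lie K brH) (hρ : IsCoherentAction K brL brH ρ)
    (Λ₁ Λ₂ : H →ₗ[K] L)
    (hΛ₁ : IsNAEmbeddingTensor K brL brH ρ Λ₁) (hΛ₂ : IsNAEmbeddingTensor K brL brH ρ Λ₂)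
    (fL : L →ₗ[K] L) (fH : H →ₗ[K] H)
    (hfL : ∀ a b c, fL (brL a b c) = brL (fL a) (fL b) (fL c))
    (hfH : ∀ a b c, fH (brH a b c) = brH (fH a) (fH b) (fH c))
    (hcomm : ∀ h, Λ₂ (fH h) = fL (Λ₁ h))
    (hequiv : ∀ a b h, fH (ρ a b h) = ρ (fL a) (fL b) (fH h)) :
    ∀ h₁ h₂ h₃, fH (ρ (Λ₁ h₁) (Λ₁ h₂) h₃)
      = ρ (Λ₂ (fH h₁)) (Λ₂ (fH h₂)) (fH h₃) := by
  intro h₁ h₂ h₃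
  rw [hequiv, hcomm, hcomm]
end

section
/- Let $H\xrightarrow{\Lambda}L$ be a nonabelian embedding tensor 3-Lie algebra. Define maps $\mathfrak{l}_\Lambda(h_1,h_2,l)=[\Lambda h_1,\Lambda h_2,l]_L$, $\mathfrak{m}_\Lambda(h_1,l,h_2)=[\Lambda h_1,l,\Lambda h_2]_L-\Lambda\rho(\Lambda h_1,l)h_2$, $\mathfrak{r}_\Lambda(l,h_1,h_2)=[l,\Lambda h_1,\Lambda h_2]_L-\Lambda\rho(l,\Lambda h_1)h_2$. Then $(L;\mathfrak{l}_\Lambda,\mathfrak{m}_\Lambda,\mathfrak{r}_\Lambda)$ is a representation of the descendent 3-Leibniz algebra $(H,[-,-,-]_\Lambda)$. -/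
private lemma sub_of_add' {A B : Type*} [AddCommGroup A] [AddCommGroup B] {f : A → B}
    (h : ∀ x y, f (x + y) = f x + f y) (x y : A) : f (x - y) = f x - f y :=
  eq_sub_of_add_eq (by rw [← h, sub_add_cancel])

/-- the maps `𝔩_Λ`, `𝔪_Λ`, `𝔯_Λ` give a representation of the descendent
3-Leibniz algebra `(H, [-,-,-]_Λ)` on `L`. -/
theorem induced_representation_on_L
    {K L H : Type*} [Field K] [AddCommGroup L] [Module K L] [AddCommGroup H] [Module K H]
    (brL : L → L → L → L) (brH : H → H → H → H) (ρ : L → L → H → H)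
    (hL : Is3Lie K brL) (hH : Is3Lie K brH) (hρ : IsCoherentAction K brL brH ρ)
    (Λ : H →ₗ[K] L) (hΛ : IsNAEmbeddingTensor K brL brH ρ Λ) :
    Is3LeibnizRep K (fun h₁ h₂ h₃ => ρ (Λ h₁) (Λ h₂) h₃ + brH h₁ h₂ h₃)
      (fun h₁ h₂ l => brL (Λ h₁) (Λ h₂) l)
      (fun h₁ l h₂ => brL (Λ h₁) l (Λ h₂) - Λ (ρ (Λ h₁) l h₂))
      (fun l h₁ h₂ => brL l (Λ h₁) (Λ h₂) - Λ (ρ l (Λ h₁) h₂)) := by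
  obtain ⟨⟨La1, Ls1, La2, Ls2, La3, Ls3⟩, ⟨Lsk1, Lsk2⟩, Lfund⟩ := hL
  obtain ⟨⟨Ha1, Hs1, Ha2, Hs2, Ha3, Hs3⟩, ⟨Hsk1, Hsk2⟩, Hfund⟩ := hH
  obtain ⟨⟨⟨ρa1, ρs1, ρa2, ρs2, ρa3, ρs3⟩, ρskew, ρax3, ρax4⟩, ρder, ρzero⟩ := hρ
  have Bzero : ∀ (a b : L) (h₁ h₂ h₃ : H), brH h₁ (ρ a b h₂) h₃ = 0 := by
    intro a b h₁ h₂ h₃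
    rw [Hsk1 h₁ (ρ a b h₂) h₃, ρzero, neg_zero]
  have lemC : ∀ (a b : L) (h₁ h₂ h₃ : H),
      ρ a b (brH h₁ h₂ h₃) = brH h₁ h₂ (ρ a b h₃) := by
    intro a b h₁ h₂ h₃
    rw [ρder, ρzero, Bzero, zero_add, zero_add]
  have subL1 : ∀ (x y b c : L), brL (x - y) b c = brL x b c - brL y b c :=
    fun x y b c => sub_of_add' (f := fun z => brL z b c) (fun p q => La1 p q b c) x y
  have subL2 : ∀ (a x y c : L), brL a (x - y) c = brL a x c - brL a y c :=
    fun a x y c => sub_of_add' (f := fun z => brL a z c) (fun p q => La2 a p q c) x y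
  have subL3 : ∀ (a b x y : L), brL a b (x - y) = brL a b x - brL a b y :=
    fun a b x y => sub_of_add' (f := fun z => brL a b z) (fun p q => La3 a b p q) x y
  have subρ1 : ∀ (x y b : L) (c : H), ρ (x - y) b c = ρ x b c - ρ y b c :=
    fun x y b c => sub_of_add' (f := fun z => ρ z b c) (fun p q => ρa1 p q b c) x y
  have subρ2 : ∀ (a x y : L) (c : H), ρ a (x - y) c = ρ a x c - ρ a y c :=
    fun a x y c => sub_of_add' (f := fun z => ρ a z c) (fun p q => ρa2 a p q c) x y
  refine ⟨?_, ?_, ?_, ?_, ?_, ?_, ?_, ?_⟩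
  · exact ⟨fun x y b c => by dsimp only; rw [map_add, La1],
      fun r x b c => by dsimp only; rw [map_smul, Ls1],
      fun a x y c => by dsimp only; rw [map_add, La2],
      fun r a x c => by dsimp only; rw [map_smul, Ls2],
      fun a b x y => by dsimp only; rw [La3],
      fun r a b x => by dsimp only; rw [Ls3]⟩
  · refine ⟨fun x y b c => ?_, fun r x b c => ?_, fun a x y c => ?_, fun r a x c => ?_,
      fun a b x y => ?_, fun r a b x => ?_⟩ <;> dsimp only <;>
      simp only [map_add, map_smul, La1, La2, La3, Ls1, Ls2, Ls3,
        ρa1, ρa2, ρa3, ρs1, ρs2, ρs3, smul_sub, smul_add] <;> abel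
  · refine ⟨fun x y b c => ?_, fun r x b c => ?_, fun a x y c => ?_, fun r a x c => ?_,
      fun a b x y => ?_, fun r a b x => ?_⟩ <;> dsimp only <;>
      simp only [map_add, map_smul, La1, La2, La3, Ls1, Ls2, Ls3,
        ρa1, ρa2, ρa3, ρs1, ρs2, ρs3, smul_sub, smul_add] <;> abel
  · intro a₁ a₂ a₃ a₄ u
    dsimp only
    rw [← hΛ a₁ a₂ a₃, ← hΛ a₁ a₂ a₄]
    exact Lfund (Λ a₁) (Λ a₂) (Λ a₃) (Λ a₄) u
  · intro a₁ a₂ a₃ a₅ u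
    dsimp only
    simp only [subL3]
    rw [Lfund (Λ a₁) (Λ a₂) (Λ a₃) u (Λ a₅), hΛ a₁ a₂ (ρ (Λ a₃) u a₅)]
    rw [← hΛ a₁ a₂ a₃, ← hΛ a₁ a₂ a₅]
    rw [ρax4 (Λ a₁) (Λ a₂) (Λ a₃) u a₅]
    simp only [ρa3, lemC, map_add]
    abel
  · intro a₁ a₂ a₄ a₅ u
    dsimp only
    simp only [subL3]
    rw [Lfund (Λ a₁) (Λ a₂) u (Λ a₄) (Λ a₅), hΛ a₁ a₂ (ρ u (Λ a₄) a₅)]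
    rw [← hΛ a₁ a₂ a₄, ← hΛ a₁ a₂ a₅]
    rw [ρax4 (Λ a₁) (Λ a₂) u (Λ a₄) a₅]
    simp only [ρa3, lemC, map_add]
    abel
  · intro a₁ a₃ a₄ a₅ u
    dsimp only
    rw [← hΛ a₃ a₄ a₅, Lfund (Λ a₁) u (Λ a₃) (Λ a₄) (Λ a₅)]
    simp only [subL1, subL2, subL3, subρ1, subρ2]
    rw [hΛ (ρ (Λ a₁) u a₃) a₄ a₅, hΛ a₃ (ρ (Λ a₁) u a₄) a₅, hΛ a₃ a₄ (ρ (Λ a₁) u a₅)]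
    simp only [ρa3, lemC]
    rw [ρax4 (Λ a₁) u (Λ a₃) (Λ a₄) a₅]
    simp only [ρzero, Bzero, map_add, map_sub, add_zero, zero_add]
    abel
  · intro a₂ a₃ a₄ a₅ u
    dsimp only
    rw [← hΛ a₃ a₄ a₅, Lfund u (Λ a₂) (Λ a₃) (Λ a₄) (Λ a₅)]
    simp only [subL1, subL2, subL3, subρ1, subρ2]
    rw [hΛ (ρ u (Λ a₂) a₃) a₄ a₅, hΛ a₃ (ρ u (Λ a₂) a₄) a₅, hΛ a₃ a₄ (ρ u (Λ a₂) a₅)]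
    simp only [ρa3, lemC]
    rw [ρax4 u (Λ a₂) (Λ a₃) (Λ a₄) a₅]
    simp only [ρzero, Bzero, map_add, map_sub, add_zero, zero_add]
    abel
end

section
/- Let $H\xrightarrow{\Lambda}L$ be a nonabelian embedding tensor 3-Lie algebra. For $a_1,a_2\in L$ define $\delta_\Lambda(a_1,a_2):H\to L$ by $\delta_\Lambda(a_1,a_2)u=\Lambda\rho(a_1,a_2)u-[a_1,a_2,\Lambda u]_L$, and for $\phi:H\to L$ define $(\delta_\Lambda\phi)(u,v,w)=-\phi([u,v,w]_\Lambda)+[\Lambda u,\Lambda v,\phi(w)]_L+[\Lambda u,\phi(v),\Lambda w]_L-\Lambda\rho(\Lambda u,\phi(v))w+[\phi(u),\Lambda v,\Lambda w]_L-\Lambda\rho(\phi(u),\Lambda v)w$. Then $\delta_\Lambda(\delta_\Lambda(a_1,a_2))=0$. -/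
/-- `δ_Λ (δ_Λ (a₁, a₂)) = 0`, where `δ_Λ(a₁,a₂) x = Λ(ρ(a₁,a₂)x) - [a₁,a₂,Λx]_L`
(written `φ x` below, fully inlined) and `δ_Λ` on 1-cochains is the coboundary of the
descendent 3-Leibniz algebra `[u,v,w]_Λ = ρ(Λu,Λv)w + [u,v,w]_H` with coefficients in `L`:
`(δ_Λ φ)(u,v,w) = -φ([u,v,w]_Λ) + [Λu,Λv,φw]_L + [Λu,φv,Λw]_L - Λ(ρ(Λu,φv)w)
  + [φu,Λv,Λw]_L - Λ(ρ(φu,Λv)w)`. -/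
theorem delta_squared_zero
    {K L H : Type*} [Field K] [AddCommGroup L] [Module K L] [AddCommGroup H] [Module K H]
    (brL : L → L → L → L) (brH : H → H → H → H) (ρ : L → L → H → H)
    (hL : Is3Lie K brL) (hH : Is3Lie K brH) (hρ : IsCoherentAction K brL brH ρ)
    (Λ : H →ₗ[K] L) (hΛ : IsNAEmbeddingTensor K brL brH ρ Λ) :
    ∀ (a₁ a₂ : L) (u v w : H),
      -(Λ (ρ a₁ a₂ (ρ (Λ u) (Λ v) w + brH u v w))
          - brL a₁ a₂ (Λ (ρ (Λ u) (Λ v) w + brH u v w)))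
        + brL (Λ u) (Λ v) (Λ (ρ a₁ a₂ w) - brL a₁ a₂ (Λ w))
        + brL (Λ u) (Λ (ρ a₁ a₂ v) - brL a₁ a₂ (Λ v)) (Λ w)
        - Λ (ρ (Λ u) (Λ (ρ a₁ a₂ v) - brL a₁ a₂ (Λ v)) w)
        + brL (Λ (ρ a₁ a₂ u) - brL a₁ a₂ (Λ u)) (Λ v) (Λ w)
        - Λ (ρ (Λ (ρ a₁ a₂ u) - brL a₁ a₂ (Λ u)) (Λ v) w) = 0 := by
  intro a₁ a₂ u v w
  obtain ⟨hLtri, hLskew, hLfund⟩ := hL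
  obtain ⟨⟨hρtri, hρskew, hρ1, hρ2⟩, hcoh, hzero⟩ := hρ
  have brLsub3 : ∀ a b x y, brL a b (x - y) = brL a b x - brL a b y := by
    intro a b x y
    have hneg : brL a b (-y) = - brL a b y := by
      have := hLtri.2.2.2.2.2 (-1 : K) a b y
      simpa [neg_one_smul] using this
    rw [sub_eq_add_neg, hLtri.2.2.2.2.1, hneg, sub_eq_add_neg]
  have brLsub2 : ∀ a x y c, brL a (x - y) c = brL a x c - brL a y c := by
    intro a x y c
    have hneg : brL a (-y) c = - brL a y c := by
      have := hLtri.2.2.2.1 (-1 : K) a y c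
      simpa [neg_one_smul] using this
    rw [sub_eq_add_neg, hLtri.2.2.1, hneg, sub_eq_add_neg]
  have brLsub1 : ∀ x y b c, brL (x - y) b c = brL x b c - brL y b c := by
    intro x y b c
    have hneg : brL (-y) b c = - brL y b c := by
      have := hLtri.2.1 (-1 : K) y b c
      simpa [neg_one_smul] using this
    rw [sub_eq_add_neg, hLtri.1, hneg, sub_eq_add_neg]
  have ρsub2 : ∀ a x y c, ρ a (x - y) c = ρ a x c - ρ a y c := by
    intro a x y c
    have hneg : ρ a (-y) c = - ρ a y c := by
      have := hρtri.2.2.2.1 (-1 : K) a y c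
      simpa [neg_one_smul] using this
    rw [sub_eq_add_neg, hρtri.2.2.1, hneg, sub_eq_add_neg]
  have ρsub1 : ∀ x y b c, ρ (x - y) b c = ρ x b c - ρ y b c := by
    intro x y b c
    have hneg : ρ (-y) b c = - ρ y b c := by
      have := hρtri.2.1 (-1 : K) y b c
      simpa [neg_one_smul] using this
    rw [sub_eq_add_neg, hρtri.1, hneg, sub_eq_add_neg]
  rw [← hΛ u v w, brLsub3, brLsub2, brLsub1, ρsub2, ρsub1,
      hρtri.2.2.2.2.1, hLfund a₁ a₂ (Λ u) (Λ v) (Λ w),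
      hΛ u v (ρ a₁ a₂ w), hΛ u (ρ a₁ a₂ v) w, hΛ (ρ a₁ a₂ u) v w,
      hcoh a₁ a₂ u v w, hρ2 a₁ a₂ (Λ u) (Λ v) w]
  simp only [map_add, map_sub]
  abel
end

section
/- Let $(L,[-,-]_L)$ be a Lie algebra and $\varsigma\in L^*$ a trace map, i.e. $\varsigma([l_1,l_2]_L)=0$ for all $l_1,l_2$. Then the ternary bracket $[l_1,l_2,l_3]_{L_\varsigma}=\varsigma(l_1)[l_2,l_3]_L+\varsigma(l_2)[l_3,l_1]_L+\varsigma(l_3)[l_1,l_2]_L$ makes $L$ into a 3-Lie algebra. -/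
/-- a Lie algebra with a trace map `ς` gives a 3-Lie algebra via
`[l₁,l₂,l₃] = ς(l₁)[l₂,l₃] + ς(l₂)[l₃,l₁] + ς(l₃)[l₁,l₂]`. -/
theorem lie_trace_gives_3Lie
    {K L : Type*} [Field K] [LieRing L] [LieAlgebra K L]
    (ς : L →ₗ[K] K) (hς : ∀ a b : L, ς ⁅a, b⁆ = 0) :
    Is3Lie K (fun a b c : L => ς a • ⁅b, c⁆ + ς b • ⁅c, a⁆ + ς c • ⁅a, b⁆) := by
  have sw : ∀ x y z : L, ⁅x, ⁅z, y⁆⁆ = -⁅x, ⁅y, z⁆⁆ := by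
    intro x y z; rw [← lie_neg, lie_skew]
  have jac2 : ∀ x y z : L, ⁅z, ⁅x, y⁆⁆ = ⁅y, ⁅x, z⁆⁆ - ⁅x, ⁅y, z⁆⁆ := by
    intro x y z
    rw [leibniz_lie x y z, ← lie_skew ⁅x, y⁆ z]
    abel
  refine ⟨⟨?_, ?_, ?_, ?_, ?_, ?_⟩, ⟨?_, ?_⟩, ?_⟩
  · intro x y b c
    simp only [map_add, map_smul, smul_eq_mul, lie_add, add_lie, lie_smul, smul_lie,
      smul_add, smul_smul, add_smul]
    abel
  · intro r x b c
    simp only [map_add, map_smul, smul_eq_mul, lie_add, add_lie, lie_smul, smul_lie,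
      smul_add, smul_smul, add_smul]
    module
  · intro a x y c
    simp only [map_add, map_smul, smul_eq_mul, lie_add, add_lie, lie_smul, smul_lie,
      smul_add, smul_smul, add_smul]
    abel
  · intro r a x c
    simp only [map_add, map_smul, smul_eq_mul, lie_add, add_lie, lie_smul, smul_lie,
      smul_add, smul_smul, add_smul]
    module
  · intro a b x y
    simp only [map_add, map_smul, smul_eq_mul, lie_add, add_lie, lie_smul, smul_lie,
      smul_add, smul_smul, add_smul]
    abel
  · intro r a b x
    simp only [map_add, map_smul, smul_eq_mul, lie_add, add_lie, lie_smul, smul_lie,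
      smul_add, smul_smul, add_smul]
    module
  · intro x y z
    simp only
    simp only [(lie_skew x z).symm, (lie_skew z y).symm, (lie_skew y x).symm,
      smul_neg, neg_add, neg_neg]
    abel
  · intro x y z
    simp only
    simp only [(lie_skew x z).symm, (lie_skew z y).symm, (lie_skew y x).symm,
      smul_neg, neg_add, neg_neg]
    abel
  · intro a b c d e
    simp only [map_add, map_smul, smul_eq_mul, lie_add, add_lie, lie_smul, smul_lie,
      smul_add, smul_smul, add_smul]
    simp only [hς, mul_zero, zero_smul, zero_add, add_zero, lie_lie, smul_sub, smul_zero]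
    simp only [fun x => sw x a b, fun x => sw x a c, fun x => sw x a d, fun x => sw x a e,
      fun x => sw x b c, fun x => sw x b d, fun x => sw x b e, fun x => sw x c d,
      fun x => sw x c e, fun x => sw x d e, smul_neg]
    simp only [jac2 a b c, jac2 a b d, jac2 a b e, jac2 a c d, jac2 a c e, jac2 a d e,
      jac2 b c d, jac2 b c e, jac2 b d e, jac2 c d e, smul_sub]
    module
end

section
/- Let $(H,[-,-]_H,\rhd)$ be a Leibniz-Lie algebra and $\varsigma\in H^*$ a linear map with $\varsigma([h_1,h_2]_H)=0$ and $\varsigma(h_1\rhd h_2)=0$ for all $h_1,h_2$. Then with $[h_1,h_2,h_3]_{H_\varsigma}=\varsigma(h_1)[h_2,h_3]_H+\varsigma(h_2)[h_3,h_1]_H+\varsigma(h_3)[h_1,h_2]_H$ and $\{h_1,h_2,h_3\}_{H_\varsigma}=\varsigma(h_1)\,h_2\rhd h_3-\varsigma(h_2)\,h_1\rhd h_3$, the triple $(H,[-,-,-]_{H_\varsigma},\{-,-,-\}_{H_\varsigma})$ is a 3-Leibniz-Lie algebra. -/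
set_option maxHeartbeats 1000000 in
/-- a Leibniz-Lie algebra with a trace map `ς` induces a
3-Leibniz-Lie algebra. -/
theorem leibnizLie_trace_gives_3LeibnizLie
    {K H : Type*} [Field K] [LieRing H] [LieAlgebra K H]
    (rhd : H → H → H) (hbil : Bilinear K rhd)
    (h1 : ∀ a b c, rhd a (rhd b c) = rhd (rhd a b) c + rhd b (rhd a c) + rhd ⁅a, b⁆ c)
    (h2 : ∀ a b c : H, rhd a ⁅b, c⁆ = 0)
    (h3 : ∀ a b c : H, ⁅rhd a b, c⁆ = 0)
    (ς : H →ₗ[K] K) (hς1 : ∀ a b : H, ς ⁅a, b⁆ = 0) (hς2 : ∀ a b, ς (rhd a b) = 0) :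
    Is3LeibnizLie K
      (fun a b c : H => ς a • ⁅b, c⁆ + ς b • ⁅c, a⁆ + ς c • ⁅a, b⁆)
      (fun a b c => ς a • rhd b c - ς b • rhd a c) := by
  obtain ⟨hb1, hb2, hb3, hb4⟩ := hbil
  have sk : ∀ x y : H, ⁅x, y⁆ = -⁅y, x⁆ := fun x y => (lie_skew x y).symm
  have hbn1 : ∀ x y : H, rhd (-x) y = -rhd x y := by
    intro x y
    have := hb2 (-1 : K) x y
    simpa [neg_smul, one_smul] using this
  have hbn2 : ∀ x y : H, rhd x (-y) = -rhd x y := by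
    intro x y
    have := hb4 (-1 : K) x y
    simpa [neg_smul, one_smul] using this
  have hbs1 : ∀ x y z : H, rhd (x - y) z = rhd x z - rhd y z := by
    intro x y z; rw [sub_eq_add_neg, hb1, hbn1, sub_eq_add_neg]
  have hbs2 : ∀ x y z : H, rhd x (y - z) = rhd x y - rhd x z := by
    intro x y z; rw [sub_eq_add_neg, hb3, hbn2, sub_eq_add_neg]
  have h3' : ∀ x y z : H, ⁅x, rhd y z⁆ = 0 := by
    intro x y z; rw [sk, h3, neg_zero]
  have J : ∀ x y z : H, ⁅z, ⁅x, y⁆⁆ = ⁅y, ⁅x, z⁆⁆ - ⁅x, ⁅y, z⁆⁆ := by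
    intro x y z
    rw [sk z ⁅x, y⁆, lie_lie]; abel
  refine ⟨⟨⟨?_, ?_, ?_, ?_, ?_, ?_⟩, ⟨?_, ?_⟩, ?_⟩, ⟨?_, ?_, ?_, ?_, ?_, ?_⟩, ?_, ?_, ?_⟩
  -- Trilinear brH (6 goals)
  · intro x y b c; dsimp only; simp only [map_add, add_smul, lie_add, add_lie, smul_add]; module
  · intro r x b c; dsimp only; simp only [map_smul, smul_lie, lie_smul, smul_add, smul_smul, smul_eq_mul]; module
  · intro a x y c; dsimp only; simp only [map_add, add_smul, lie_add, add_lie, smul_add]; module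
  · intro r a x c; dsimp only; simp only [map_smul, smul_lie, lie_smul, smul_add, smul_smul, smul_eq_mul]; module
  · intro a b x y; dsimp only; simp only [map_add, add_smul, lie_add, add_lie, smul_add]; module
  · intro r a b x; dsimp only; simp only [map_smul, smul_lie, lie_smul, smul_add, smul_smul, smul_eq_mul]; module
  -- Skew (2 goals)
  · intro a b c; dsimp only; rw [sk c a, sk c b, sk b a]; module
  · intro a b c; dsimp only; rw [sk c a, sk c b, sk b a]; module
  -- FundId
  · intro a b c d e; dsimp only
    simp only [map_add, map_smul, hς1, smul_eq_mul, mul_zero, add_zero, zero_add, zero_smul,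
      lie_add, add_lie, lie_smul, smul_lie, smul_add, smul_smul, lie_lie]
    simp only [sk e c, sk e a, sk d a, sk c a, lie_neg, smul_neg, neg_neg, smul_sub, neg_sub]
    simp only [J b c e, J a c e, J a b e, J a d e, J a b d, J a c d, J a b c,
      smul_sub, smul_neg, neg_sub, neg_neg]
    module
  -- Trilinear tr (6 goals)
  · intro x y b c; dsimp only; simp only [map_add, add_smul, hb1, hb3, smul_add]; module
  · intro r x b c; dsimp only; simp only [map_smul, hb2, hb4, smul_sub, smul_smul, smul_eq_mul]; module
  · intro a x y c; dsimp only; simp only [map_add, add_smul, hb1, hb3, smul_add]; module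
  · intro r a x c; dsimp only; simp only [map_smul, hb2, hb4, smul_sub, smul_smul, smul_eq_mul]; module
  · intro a b x y; dsimp only; simp only [map_add, add_smul, hb1, hb3, smul_add]; module
  · intro r a b x; dsimp only; simp only [map_smul, hb2, hb4, smul_sub, smul_smul, smul_eq_mul]; module
  -- main tr identity
  · intro p q r s t; dsimp only
    simp only [map_sub, map_add, map_smul, hς2, hς1, smul_eq_mul, mul_zero, sub_zero, zero_sub,
      zero_smul, add_zero, zero_add, hbs1, hbs2, hb2, hb4, hbn1, hbn2, smul_sub, smul_add,
      smul_smul, smul_neg]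
    rw [h1 q s t, h1 q r t, h1 p s t, h1 p r t]
    simp only [sk r p, sk s p, hbn1, smul_neg, neg_neg, hb1, hb2, smul_add, smul_smul,
      smul_sub]
    module
  -- tr _ _ (brH _ _ _) = 0
  · intro p q r s t; dsimp only
    simp only [hb3, hb4, h2, smul_zero, add_zero, zero_add, sub_self]
  -- brH (tr _ _ _) _ _ = 0
  · intro p q r s t; dsimp only
    simp only [map_sub, map_smul, hς2, smul_eq_mul, mul_zero, sub_zero, sub_self, zero_smul,
      sub_lie, lie_sub, smul_lie, lie_smul, h3, h3', smul_zero, zero_sub, neg_zero, add_zero,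
      zero_add, sub_zero]
end
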